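/- For g of type A_n with adapted sequence ι and the associated function P, define the linear forms box^A_j(s) = x_{s+P(j), j} − x_{s+P(j-1)+1, j-1} for 1 ≤ j ≤ n+1 and s ∈ ℤ (with x_{m,0} = x_{m,n+1} = 0, and x_{m,i} = 0 for m ≤ 0). Then box^A_{j+1}(s) = box^A_j(s) − β_{s+P(j), j} for all 1 ≤ j ≤ n and s ≥ 1 − P(j), where β_{s,j} denotes the linear form β_k under the re-indexing x_k = x_{s,j} determined by ι. -/

import Mathlib

/-! Combinatorics of an adapted sequence `ι` for a classical Lie algebra, and the
column-tableau linear forms of Kanakubo–Nakashima in re-indexed coordinates `x_{m,j}`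
(the coordinate for the `m`-th occurrence of the index `j` in `ι`). -/

noncomputable section

/-- First position `m ≥ 1` with `ι m ∈ {i, j}`. -/
def firstBoth (ι : ℕ → ℕ) (i j : ℕ) : ℕ := sInf {m | 1 ≤ m ∧ (ι m = i ∨ ι m = j)}

/-- `p_{i,j} = 1` if `i` occurs before `j` in `ι`, and `0` otherwise. -/
def pOf (ι : ℕ → ℕ) (i j : ℕ) : ℕ := if ι (firstBoth ι i j) = i then 1 else 0

/-- `ι⁽ⁱ⁾`, the first position of `ι` at which `i` occurs. -/
def firstOcc (ι : ℕ → ℕ) (i : ℕ) : ℕ := sInf {m | 1 ≤ m ∧ ι m = i}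

/-- `P(k) = p_{2,1} + p_{3,2} + ⋯ + p_{k,k-1}` (so `P 0 = P 1 = 0`). -/
def Pof (ι : ℕ → ℕ) (k : ℕ) : ℕ := ∑ i ∈ Finset.Icc 2 k, pOf ι i (i - 1)

/-- The condition that every index `1,…,n` occurs infinitely often in `ι` and
consecutive entries of `ι` differ. -/
def SeqCond (n : ℕ) (ι : ℕ → ℕ) : Prop :=
  (∀ m, 1 ≤ m → 1 ≤ ι m ∧ ι m ≤ n) ∧
  (∀ m, 1 ≤ m → ι m ≠ ι (m + 1)) ∧
  (∀ i, 1 ≤ i → i ≤ n → ∀ N : ℕ, ∃ m, N < m ∧ ι m = i)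

/-- `ι` is adapted to the type `A_n` Cartan matrix: for adjacent indices `i, j`, any two
consecutive members of the subsequence of `ι` consisting of `i`'s and `j`'s differ. -/
def AdaptedA (n : ℕ) (ι : ℕ → ℕ) : Prop :=
  ∀ i j : ℕ, 1 ≤ i → i ≤ n → 1 ≤ j → j ≤ n → (i = j + 1 ∨ j = i + 1) →
    ∀ m m' : ℕ, 1 ≤ m → m < m' → (ι m = i ∨ ι m = j) → (ι m' = i ∨ ι m' = j) →
      (∀ r, m < r → r < m' → ι r ≠ i ∧ ι r ≠ j) → ι m ≠ ι m'

/-- Linear forms on `ℚ^∞`, presented by their coefficients in the re-indexed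
coordinates `x_{m,j}`. -/
abbrev LinF : Type := ℤ × ℕ → ℚ

/-- The coordinate functional `x_{m,j}` (zero when `m ≤ 0`, `j = 0` or `j > n`). -/
def XT (n : ℕ) (m : ℤ) (j : ℕ) : LinF :=
  fun q => if q = (m, j) ∧ 1 ≤ m ∧ 1 ≤ j ∧ j ≤ n then 1 else 0

/-- The box `⌈j⌉^A_s = x_{s+P(j),j} − x_{s+P(j−1)+1,j−1}` of type `A_n`. -/
def boxA (n : ℕ) (ι : ℕ → ℕ) (j : ℕ) (s : ℤ) : LinF :=
  XT n (s + (Pof ι j : ℤ)) j - XT n (s + (Pof ι (j - 1) : ℤ) + 1) (j - 1)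

/-- The column tableau `[j₁,…,j_k]^A_s = Σ_{i=1}^k ⌈j_i⌉^A_{s+k−i}` (here `j` is
`0`-indexed: `j ⟨0⟩ = j₁, …`). -/
def tabA (n : ℕ) (ι : ℕ → ℕ) {k : ℕ} (j : Fin k → ℕ) (s : ℤ) : LinF :=
  ∑ i : Fin k, boxA n ι (j i) (s + (k : ℤ) - 1 - ((i : ℕ) : ℤ))

/-- The Nakashima–Zelevinsky form `β_{m,j}` in re-indexed coordinates, for `ι` adapted
to a type `A` Cartan matrix:
`β_{m,j} = x_{m,j} + x_{m+1,j} − x_{m+p_{j−1,j},j−1} − x_{m+p_{j+1,j},j+1}`. -/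
def betaA (n : ℕ) (ι : ℕ → ℕ) (m : ℤ) (j : ℕ) : LinF :=
  XT n m j + XT n (m + 1) j - XT n (m + (pOf ι (j - 1) j : ℤ)) (j - 1)
    - XT n (m + (pOf ι (j + 1) j : ℤ)) (j + 1)

/-- Affine-linear forms: a constant term together with a linear form. -/
abbrev AffF : Type := ℚ × LinF

/-- The form `β⁽⁻⁾_{m,j}` in re-indexed coordinates: `β_{m−1,j}` when `m ≥ 2`, and the
`λ`-dependent form with constant term `−⟨h_j, λ⟩` when `m = 1`. -/
def betaMA (n : ℕ) (ι : ℕ → ℕ) (lam : ℕ → ℤ) (m : ℤ) (j : ℕ) : AffF :=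
  ((if m = 1 then -(lam j : ℚ) else 0), betaA n ι (m - 1) j)

/-- The operator `Ŝ_{m,j}` of the polyhedral realization of `B(λ)` in re-indexed
coordinates. -/
def ShatA (n : ℕ) (ι : ℕ → ℕ) (lam : ℕ → ℤ) (m : ℤ) (j : ℕ) (φ : AffF) : AffF :=
  if 0 < φ.2 (m, j) then φ - φ.2 (m, j) • (((0 : ℚ), betaA n ι m j) : AffF)
  else φ - φ.2 (m, j) • betaMA n ι lam m j

end

lemma XT_zero (n : ℕ) (m : ℤ) : XT n m 0 = 0 := by
  funext q; simp [XT]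

lemma firstBoth_comm (ι : ℕ → ℕ) (i j : ℕ) : firstBoth ι i j = firstBoth ι j i := by
  unfold firstBoth
  congr 1
  ext m
  simp only [Set.mem_setOf_eq]
  tauto

lemma pOf_add (ι : ℕ → ℕ) (i j : ℕ) (hne : ∃ m, 1 ≤ m ∧ ι m = i) (hij : i ≠ j) :
    pOf ι i j + pOf ι j i = 1 := by
  have hS : {m | 1 ≤ m ∧ (ι m = i ∨ ι m = j)}.Nonempty := by
    obtain ⟨m, hm1, hm2⟩ := hne
    exact ⟨m, hm1, Or.inl hm2⟩
  have hmem := Nat.sInf_mem hS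
  rw [pOf, pOf, firstBoth_comm ι j i]
  rcases hmem.2 with h | h
  · simp [firstBoth, h, hij.symm, hij]
  · have : ι (firstBoth ι i j) ≠ i := by rw [show firstBoth ι i j = sInf _ from rfl, h]; exact fun hc => hij hc.symm
    simp [firstBoth] at h ⊢
    simp [h, this, hij, hij.symm]

lemma Pof_succ (ι : ℕ → ℕ) (j : ℕ) (hj : 1 ≤ j) :
    Pof ι (j + 1) = Pof ι j + pOf ι (j + 1) j := by
  unfold Pof
  rw [Finset.sum_Icc_succ_top (by omega : 2 ≤ j + 1)]
  simp

/-- Type `A`: `⌈j+1⌉^A_s = ⌈j⌉^A_s − β_{s+P(j),j}` for `1 ≤ j ≤ n` and `s ≥ 1 − P(j)`. -/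
theorem boxA_succ (n : ℕ) (hn : 1 ≤ n) (ι : ℕ → ℕ)
    (hseq : SeqCond n ι) (had : AdaptedA n ι)
    (j : ℕ) (hj1 : 1 ≤ j) (hjn : j ≤ n) (s : ℤ) (hs : 1 - (Pof ι j : ℤ) ≤ s) :
    boxA n ι (j + 1) s = boxA n ι j s - betaA n ι (s + (Pof ι j : ℤ)) j := by
  have e1 : s + (Pof ι (j + 1) : ℤ) = s + (Pof ι j : ℤ) + (pOf ι (j + 1) j : ℤ) := by
    rw [Pof_succ ι j hj1]; push_cast; ring
  unfold boxA betaA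
  rw [show (j + 1) - 1 = j from rfl, e1]
  rcases eq_or_lt_of_le hj1 with h1 | h2
  · -- j = 1
    subst h1
    simp only [show (1 : ℕ) - 1 = 0 from rfl, XT_zero]
    abel
  · -- j ≥ 2
    have hj2 : 2 ≤ j := h2
    have hPs : Pof ι j = Pof ι (j - 1) + pOf ι j (j - 1) := by
      have := Pof_succ ι (j - 1) (by omega)
      rwa [show j - 1 + 1 = j by omega] at this
    have hex : ∃ m, 1 ≤ m ∧ ι m = j := by
      obtain ⟨m, hm1, hm2⟩ := hseq.2.2 j hj1 hjn 0
      exact ⟨m, hm1, hm2⟩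
    have hsum : pOf ι j (j - 1) + pOf ι (j - 1) j = 1 :=
      pOf_add ι j (j - 1) hex (by omega)
    have e2 : s + (Pof ι j : ℤ) + (pOf ι (j - 1) j : ℤ)
        = s + (Pof ι (j - 1) : ℤ) + 1 := by
      rw [hPs]; push_cast; omega
    rw [e2]
    abel
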